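/- (Proposition: maximum principle for the semi-discrete asymmetric scheme with absorbing condition.) Let α ∈ (0,2) with α ≠ 1, β ∈ (−1,1), f ∈ C¹(ℝ), g ∈ C²(ℝ), σ ∈ C¹(ℝ) with σ(x) ≠ 0 for all x and |σ(·)|^α ∈ C²(ℝ). Let J ≥ 2 be an integer, h = 1/J, x_j = jh for j ∈ ℤ, T > 0, and set I_h := {j ∈ ℤ : |jh| < 1}, I_{h,T} := I_h × (0,T], ∂I_{h,T} := (ℤ × [0,T]) ∖ I_{h,T}. Define M(x) := |σ(x)|^α (g²/|σ|^α)′(x) − f(x), N(x) := (1/2)|σ(x)|^α (g²/|σ|^α)″(x) − |σ(x)|^α (f/|σ|^α)′(x), C_{1,β}(x) := C_p(β) if σ(x) > 0 and C_n(β) if σ(x) < 0, C_{2,β}(x) := −βC_α if σ(x) > 0 and βC_α if σ(x) < 0, M̂(x) := M(x) − |σ(x)|^α (C_{2,β}(x)/(1−α))[|σ(x)|^{1−α} − (1−x)^{1−α}] if |σ(x)| > 1−x and M̂(x) := M(x) if |σ(x)| < 1−x, N̂(x) := N(x) + βC_α σ′(x) − |σ(x)|^α (C_{1,−β}(x)/α)(1−x)^{−α}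 − |σ(x)|^α (C_{1,β}(x)/α)(1+x)^{−α}, and C_h(x) := g(x)²/2 − (C_α|σ(x)|^α/2) ζ(α−1) h^{2−α}. For a family U = (U_j(t))_{j∈ℤ} with each U_j : [0,T] → ℝ continuous and differentiable on (0,T], define for j ∈ I_h: (AU)_j := C_h(x_j)(U_{j+1} − 2U_j + U_{j−1})/h² + M̂(x_j) δ_u U_j + N̂(x_j) U_j, where δ_u U_j := (U_j − U_{j−1})/h if M̂(x_j) < 0 and (U_{j+1} − U_j)/h if M̂(x_j) ≥ 0; and (BU)_j := |σ(x_j)|^α C_{1,β}(x_j) h ∑_{k=1−J, k≠j}^{J−1} (U_k − U_j)|x_k − x_j|^{−1−α} + |σ(x_j)|^α C_{2,β}(x_j) h ∑′_{k=j+1}^{J} (U_k − U_j − (x_k − x_j)(U_j − U_{j−1})/h)|x_k − x_j|^{−1−α} if |σ(x_j)| + x_j > 1, and (BU)_j := |σ(x_j)|^α C_{1,β}(x_j) h ∑_{k=1−J, k≠j}^{J−1} (U_k − U_j)|x_k − x_j|^{−1−α} + |σ(x_j)|^α C_{2,β}(x_j) h [ ∑′_{k=j+1}^{j+m} (U_k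 − U_j − (x_k − x_j)(U_j − U_{j−1})/h)|x_k − x_j|^{−1−α} + ∑_{k=j+m}^{J} (U_k − U_j)|x_k − x_j|^{−1−α} ] if |σ(x_j)| + x_j < 1, where m := ⌊|σ(x_j)|/h⌋, ∑ gives weight 1/2 to the terms at both end indices, and ∑′ gives weight 1/2 only to the term at the top index. Set (R̃U)_j := (AU)_j + (BU)_j. Assume N̂(x_j) ≤ 0, C_{2,β}(x_j) ≥ 0, and C_h(x_j) ≥ 0 for all j ∈ I_h, and assume U_j(t) = 0 for all |j| ≥ J and t ∈ [0,T]. Then: (i) if dU_j/dt − (R̃U)_j ≤ 0 for all (j,t) ∈ I_{h,T}, then max_{(j,t) ∈ ℤ×[0,T]} U_j(t) = max_{(j,t) ∈ ∂I_{h,T}} U_j(t); and (ii) if dU_j/dt − (R̃U)_j ≥ 0 for all (j,t) ∈ I_{h,T}, then min_{(j,t) ∈ ℤ×[0,T]} U_j(t) = min_{(j,t) ∈ ∂I_{h,T}} U_j(t). -/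

import Mathlib

open MeasureTheory Real Set Filter Topology Finset

/-- The constant `C_α`: `α(1-α)/(Γ(2-α)cos(πα/2))` for `α ≠ 1`, and `2/π` for `α = 1`. -/
noncomputable def Calpha (α : ℝ) : ℝ :=
  if α = 1 then 2 / π else α * (1 - α) / (Real.Gamma (2 - α) * Real.cos (π * α / 2))

/-- `C_p(β) = C_α (1+β)/2`. -/
noncomputable def Cp (α β : ℝ) : ℝ := Calpha α * (1 + β) / 2

/-- `C_n(β) = C_α (1-β)/2`. -/
noncomputable def Cn (α β : ℝ) : ℝ := Calpha α * (1 - β) / 2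

/-- The (real value of the) analytically continued Riemann zeta function at a real point. -/
noncomputable def zetaR (x : ℝ) : ℝ := (riemannZeta (x : ℂ)).re

lemma Calpha_pos {α : ℝ} (hα : α ∈ Set.Ioo (0:ℝ) 2) (hα1 : α ≠ 1) : 0 < Calpha α := by
  obtain ⟨h0, h2⟩ := hα
  rw [Calpha, if_neg hα1]
  have hπ := Real.pi_pos
  have hΓ : 0 < Real.Gamma (2 - α) := Real.Gamma_pos_of_pos (by linarith)
  rcases lt_or_gt_of_ne hα1 with h1 | h1
  · have hc : 0 < Real.cos (π * α / 2) := by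
      apply Real.cos_pos_of_mem_Ioo
      constructor
      · nlinarith
      · nlinarith
    exact div_pos (by nlinarith) (by positivity)
  · have hc : Real.cos (π * α / 2) < 0 := by
      apply Real.cos_neg_of_pi_div_two_lt_of_lt
      · nlinarith
      · nlinarith
    exact div_pos_of_neg_of_neg (by nlinarith) (by nlinarith)

lemma key (J : ℤ) (hJ : 2 ≤ J) (h : ℝ) (hh : h = 1 / (J : ℝ)) (T : ℝ) (hT : 0 < T)
    (α : ℝ) (σ Mhat Nhat C1b C2b Ch : ℝ → ℝ)
    (hC1 : ∀ x : ℝ, 0 ≤ C1b x)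
    (U U' AU BU : ℤ → ℝ → ℝ)
    (hUcont : ∀ j : ℤ, ContinuousOn (U j) (Set.Icc 0 T))
    (hUderiv : ∀ j : ℤ, ∀ t ∈ Set.Ioc (0:ℝ) T, HasDerivAt (U j) (U' j t) t)
    (hUzero : ∀ j : ℤ, ∀ t : ℝ, J ≤ |j| → U j t = 0)
    (hAU : ∀ j : ℤ, |(j : ℝ) * h| < 1 → ∀ t : ℝ, AU j t =
      Ch ((j : ℝ) * h) * (U (j + 1) t - 2 * U j t + U (j - 1) t) / h ^ 2
        + Mhat ((j : ℝ) * h) *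
            (if Mhat ((j : ℝ) * h) < 0 then (U j t - U (j - 1) t) / h
             else (U (j + 1) t - U j t) / h)
        + Nhat ((j : ℝ) * h) * U j t)
    (hBU : ∀ j : ℤ, |(j : ℝ) * h| < 1 → ∀ t : ℝ, BU j t =
      if 1 < |σ ((j : ℝ) * h)| + (j : ℝ) * h then
        |σ ((j : ℝ) * h)| ^ α * C1b ((j : ℝ) * h) * h *
          ∑ k ∈ (Finset.Icc (1 - J) (J - 1)).erase j,
            (if k = 1 - J ∨ k = J - 1 then (1/2 : ℝ) else 1) *
              (U k t - U j t) * |(k : ℝ) * h - (j : ℝ) * h| ^ (-(1 + α))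
        + |σ ((j : ℝ) * h)| ^ α * C2b ((j : ℝ) * h) * h *
          ∑ k ∈ Finset.Icc (j + 1) J,
            (if k = J then (1/2 : ℝ) else 1) *
              (U k t - U j t - ((k : ℝ) * h - (j : ℝ) * h) * (U j t - U (j - 1) t) / h) *
                |(k : ℝ) * h - (j : ℝ) * h| ^ (-(1 + α))
      else
        |σ ((j : ℝ) * h)| ^ α * C1b ((j : ℝ) * h) * h *
          ∑ k ∈ (Finset.Icc (1 - J) (J - 1)).erase j,
            (if k = 1 - J ∨ k = J - 1 then (1/2 : ℝ) else 1) *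
              (U k t - U j t) * |(k : ℝ) * h - (j : ℝ) * h| ^ (-(1 + α))
        + |σ ((j : ℝ) * h)| ^ α * C2b ((j : ℝ) * h) * h *
          ((∑ k ∈ Finset.Icc (j + 1) (j + ⌊|σ ((j : ℝ) * h)| / h⌋),
              (if k = j + ⌊|σ ((j : ℝ) * h)| / h⌋ then (1/2 : ℝ) else 1) *
                (U k t - U j t - ((k : ℝ) * h - (j : ℝ) * h) * (U j t - U (j - 1) t) / h) *
                  |(k : ℝ) * h - (j : ℝ) * h| ^ (-(1 + α)))
            + ∑ k ∈ Finset.Icc (j + ⌊|σ ((j : ℝ) * h)| / h⌋) J,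
                (if k = j + ⌊|σ ((j : ℝ) * h)| / h⌋ ∨ k = J then (1/2 : ℝ) else 1) *
                  (U k t - U j t) * |(k : ℝ) * h - (j : ℝ) * h| ^ (-(1 + α))))
    (hNneg : ∀ j : ℤ, |(j : ℝ) * h| < 1 → Nhat ((j : ℝ) * h) ≤ 0)
    (hC2pos : ∀ j : ℤ, |(j : ℝ) * h| < 1 → 0 ≤ C2b ((j : ℝ) * h))
    (hChpos : ∀ j : ℤ, |(j : ℝ) * h| < 1 → 0 ≤ Ch ((j : ℝ) * h))
    (hsub : ∀ j : ℤ, ∀ t : ℝ, |(j : ℝ) * h| < 1 → t ∈ Set.Ioc (0:ℝ) T →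
        U' j t - (AU j t + BU j t) ≤ 0) :
    sSup {y : ℝ | ∃ j : ℤ, ∃ t ∈ Set.Icc (0:ℝ) T, y = U j t}
      = sSup {y : ℝ | ∃ j : ℤ, ∃ t ∈ Set.Icc (0:ℝ) T,
          ¬(|(j : ℝ) * h| < 1 ∧ t ∈ Set.Ioc (0:ℝ) T) ∧ y = U j t} := by
  have hJR : (0:ℝ) < (J:ℝ) := by exact_mod_cast (by omega : (0:ℤ) < J)
  have hh0 : 0 < h := by rw [hh]; positivity
  have hJne : (J:ℝ) ≠ 0 := ne_of_gt hJR
  have hUJ0 : U J 0 = 0 := hUzero J 0 (le_abs_self J)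
  set S := {y : ℝ | ∃ j : ℤ, ∃ t ∈ Set.Icc (0:ℝ) T, y = U j t} with hS
  set S' := {y : ℝ | ∃ j : ℤ, ∃ t ∈ Set.Icc (0:ℝ) T,
      ¬(|(j : ℝ) * h| < 1 ∧ t ∈ Set.Ioc (0:ℝ) T) ∧ y = U j t} with hS'
  have h0T : (0:ℝ) ∈ Set.Icc (0:ℝ) T := ⟨le_refl 0, hT.le⟩
  have hJnotlt : ¬(|(J : ℝ) * h| < 1 ∧ (0:ℝ) ∈ Set.Ioc (0:ℝ) T) := by
    rintro ⟨h1, -⟩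
    rw [hh, mul_one_div, div_self hJne] at h1
    simp at h1
  -- compactness / boundedness
  have hK : IsCompact (⋃ j ∈ Set.Icc (-J) J, U j '' Set.Icc (0:ℝ) T) :=
    (Set.finite_Icc (-J) J).isCompact_biUnion
      (fun j _ => isCompact_Icc.image_of_continuousOn (hUcont j))
  have hSsub : S ⊆ ⋃ j ∈ Set.Icc (-J) J, U j '' Set.Icc (0:ℝ) T := by
    rintro y ⟨j, t, ht, rfl⟩
    by_cases hjJ : j ∈ Set.Icc (-J) J
    · exact Set.mem_biUnion hjJ ⟨t, ht, rfl⟩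
    · have hJle : J ≤ |j| := by
        rw [Set.mem_Icc, not_and_or, not_le, not_le] at hjJ
        rcases hjJ with h1 | h1
        · calc J ≤ -j := by omega
            _ ≤ |j| := neg_le_abs j
        · exact le_trans (le_of_lt h1) (le_abs_self j)
      rw [hUzero j t hJle]
      exact Set.mem_biUnion (Set.mem_Icc.mpr (⟨by omega, le_refl J⟩ : -J ≤ J ∧ J ≤ J)) ⟨0, h0T, hUJ0⟩
  have hSbdd : BddAbove S := BddAbove.mono hSsub hK.bddAbove
  have hS'sub : S' ⊆ S := by rintro y ⟨j, t, ht, -, rfl⟩; exact ⟨j, t, ht, rfl⟩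
  have hS'bdd : BddAbove S' := BddAbove.mono hS'sub hSbdd
  have hSne : S.Nonempty := ⟨U J 0, ⟨J, 0, h0T, rfl⟩⟩
  have hS'ne : S'.Nonempty := ⟨U J 0, ⟨J, 0, h0T, hJnotlt, rfl⟩⟩
  -- main epsilon estimate
  have main : ∀ ε : ℝ, 0 < ε → sSup S ≤ sSup S' + ε * T := by
    intro ε hε
    set W : ℤ → ℝ → ℝ := fun j t => U j t - ε * t with hWdef
    have hWcont : ∀ j : ℤ, ContinuousOn (W j) (Set.Icc 0 T) := fun j =>
      (hUcont j).sub ((continuous_const.mul continuous_id).continuousOn)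
    set KW := ⋃ j ∈ Set.Icc (-J) J, W j '' Set.Icc (0:ℝ) T with hKW
    have hKWc : IsCompact KW :=
      (Set.finite_Icc (-J) J).isCompact_biUnion
        (fun j _ => isCompact_Icc.image_of_continuousOn (hWcont j))
    have hJmem : (J : ℤ) ∈ Set.Icc (-J) J := Set.mem_Icc.mpr ⟨by omega, le_refl J⟩
    have hKWne : KW.Nonempty := ⟨W J 0, Set.mem_biUnion hJmem ⟨0, h0T, rfl⟩⟩
    have hWJ0 : W J 0 = 0 := by simp [hWdef, hUJ0]
    obtain ⟨j₀, hj₀, t₀, ht₀, hval⟩ :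
        ∃ j₀ ∈ Set.Icc (-J) J, ∃ t₀ ∈ Set.Icc (0:ℝ) T, W j₀ t₀ = sSup KW := by
      have hm := hKWc.sSup_mem hKWne
      rw [hKW] at hm
      rcases Set.mem_iUnion₂.mp hm with ⟨j₀, hj₀, hx⟩
      rcases hx with ⟨t₀, ht₀, hvv⟩
      exact ⟨j₀, hj₀, t₀, ht₀, hvv⟩
    have hdom : ∀ (j : ℤ) (t : ℝ), t ∈ Set.Icc (0:ℝ) T → W j t ≤ W j₀ t₀ := by
      intro j t ht
      rw [hval]
      by_cases hjJ : j ∈ Set.Icc (-J) J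
      · exact le_csSup hKWc.bddAbove (Set.mem_biUnion hjJ ⟨t, ht, rfl⟩)
      · have hJle : J ≤ |j| := by
          rw [Set.mem_Icc, not_and_or, not_le, not_le] at hjJ
          rcases hjJ with h1 | h1
          · calc J ≤ -j := by omega
              _ ≤ |j| := neg_le_abs j
          · exact le_trans (le_of_lt h1) (le_abs_self j)
        have h1 : W j t = -(ε * t) := by simp [hWdef, hUzero j t hJle]
        have h2 : W J 0 ≤ sSup KW := le_csSup hKWc.bddAbove (Set.mem_biUnion hJmem ⟨0, h0T, rfl⟩)
        rw [h1]
        nlinarith [ht.1, h2, hWJ0]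
    by_cases hcase : |(j₀ : ℝ) * h| < 1 ∧ t₀ ∈ Set.Ioc (0:ℝ) T
    · -- interior maximum: contradiction
      exfalso
      obtain ⟨hj₀1, ht₀i⟩ := hcase
      have hmax : ∀ k : ℤ, U k t₀ ≤ U j₀ t₀ := by
        intro k
        have := hdom k t₀ ht₀
        simp only [hWdef] at this
        linarith
      have hup : U (j₀ - 1) t₀ ≤ U j₀ t₀ := hmax _
      have hW0 : 0 ≤ W j₀ t₀ := by rw [← hWJ0]; exact hdom J 0 h0T
      have hU0 : 0 ≤ U j₀ t₀ := by
        simp only [hWdef] at hW0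
        nlinarith [ht₀i.1]
      -- derivative at max is ≥ ε
      have hd : ε ≤ U' j₀ t₀ := by
        have hW' : HasDerivAt (W j₀) (U' j₀ t₀ - ε) t₀ := by
          have := (hUderiv j₀ t₀ ht₀i).sub ((hasDerivAt_id t₀).const_mul ε)
          rw [mul_one] at this; exact this
        rw [hasDerivAt_iff_tendsto_slope] at hW'
        have hW'' : Tendsto (slope (W j₀) t₀) (𝓝[<] t₀) (𝓝 (U' j₀ t₀ - ε)) :=
          hW'.mono_left (nhdsWithin_mono _ (fun x hx => ne_of_lt hx))
        have hnn : ∀ᶠ t in 𝓝[<] t₀, 0 ≤ slope (W j₀) t₀ t := by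
          filter_upwards [Ioo_mem_nhdsLT_of_mem
            (⟨ht₀i.1, le_refl t₀⟩ : t₀ ∈ Set.Ioc 0 t₀)] with t ht
          have h1 : W j₀ t ≤ W j₀ t₀ := hdom j₀ t ⟨ht.1.le, ht.2.le.trans ht₀i.2⟩
          rw [slope_def_field]
          apply div_nonneg_iff.mpr
          right
          constructor
          · linarith
          · linarith [ht.2]
        have := ge_of_tendsto hW'' hnn
        linarith
      have hNn := hNneg j₀ hj₀1
      have hC2n := hC2pos j₀ hj₀1
      have hChn := hChpos j₀ hj₀1
      have hσnn : (0:ℝ) ≤ |σ ((j₀:ℝ) * h)| ^ α := Real.rpow_nonneg (abs_nonneg _) α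
      have hkx : ∀ k : ℤ, j₀ ≤ k → 0 ≤ (k:ℝ) * h - (j₀:ℝ) * h := by
        intro k hk
        have : (j₀:ℝ) ≤ (k:ℝ) := Int.cast_le.mpr hk
        nlinarith
      have hc2term : ∀ k : ℤ, j₀ ≤ k →
          U k t₀ - U j₀ t₀ - ((k:ℝ) * h - (j₀:ℝ) * h) * (U j₀ t₀ - U (j₀ - 1) t₀) / h ≤ 0 := by
        intro k hk
        have h1 := hmax k
        have h2 : 0 ≤ ((k:ℝ) * h - (j₀:ℝ) * h) * (U j₀ t₀ - U (j₀ - 1) t₀) / h :=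
          div_nonneg (mul_nonneg (hkx k hk) (by linarith)) hh0.le
        linarith
      -- A part nonpositive
      have hAUle : AU j₀ t₀ ≤ 0 := by
        rw [hAU j₀ hj₀1 t₀]
        have T1 : Ch ((j₀:ℝ) * h) * (U (j₀ + 1) t₀ - 2 * U j₀ t₀ + U (j₀ - 1) t₀) / h ^ 2 ≤ 0 := by
          apply div_nonpos_of_nonpos_of_nonneg _ (sq_nonneg h)
          apply mul_nonpos_of_nonneg_of_nonpos hChn
          linarith [hmax (j₀ + 1), hmax (j₀ - 1)]
        have T3 : Nhat ((j₀:ℝ) * h) * U j₀ t₀ ≤ 0 :=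
          mul_nonpos_of_nonpos_of_nonneg hNn hU0
        have T2 : Mhat ((j₀:ℝ) * h) *
            (if Mhat ((j₀:ℝ) * h) < 0 then (U j₀ t₀ - U (j₀ - 1) t₀) / h
             else (U (j₀ + 1) t₀ - U j₀ t₀) / h) ≤ 0 := by
          split_ifs with hM
          · exact mul_nonpos_of_nonpos_of_nonneg hM.le
              (div_nonneg (by linarith) hh0.le)
          · exact mul_nonpos_of_nonneg_of_nonpos (not_lt.mp hM)
              (div_nonpos_of_nonpos_of_nonneg (by linarith [hmax (j₀ + 1)]) hh0.le)
        linarith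
      -- B part nonpositive
      have hBUle : BU j₀ t₀ ≤ 0 := by
        rw [hBU j₀ hj₀1 t₀]
        have hP1 : (0:ℝ) ≤ |σ ((j₀:ℝ) * h)| ^ α * C1b ((j₀:ℝ) * h) * h :=
          mul_nonneg (mul_nonneg hσnn (hC1 _)) hh0.le
        have hP2 : (0:ℝ) ≤ |σ ((j₀:ℝ) * h)| ^ α * C2b ((j₀:ℝ) * h) * h :=
          mul_nonneg (mul_nonneg hσnn hC2n) hh0.le
        have hS1 : ∑ k ∈ (Finset.Icc (1 - J) (J - 1)).erase j₀,
            (if k = 1 - J ∨ k = J - 1 then (1/2 : ℝ) else 1) *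
              (U k t₀ - U j₀ t₀) * |(k : ℝ) * h - (j₀ : ℝ) * h| ^ (-(1 + α)) ≤ 0 := by
          apply Finset.sum_nonpos
          intro k _
          apply mul_nonpos_of_nonpos_of_nonneg _ (Real.rpow_nonneg (abs_nonneg _) _)
          apply mul_nonpos_of_nonneg_of_nonpos (by split_ifs <;> norm_num)
          linarith [hmax k]
        split_ifs with hc
        · apply add_nonpos (mul_nonpos_of_nonneg_of_nonpos hP1 hS1)
          apply mul_nonpos_of_nonneg_of_nonpos hP2
          apply Finset.sum_nonpos
          intro k hk
          apply mul_nonpos_of_nonpos_of_nonneg _ (Real.rpow_nonneg (abs_nonneg _) _)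
          apply mul_nonpos_of_nonneg_of_nonpos (by split_ifs <;> norm_num)
          exact hc2term k (by have := (Finset.mem_Icc.mp hk).1; omega)
        · apply add_nonpos (mul_nonpos_of_nonneg_of_nonpos hP1 hS1)
          apply mul_nonpos_of_nonneg_of_nonpos hP2
          apply add_nonpos
          · apply Finset.sum_nonpos
            intro k hk
            apply mul_nonpos_of_nonpos_of_nonneg _ (Real.rpow_nonneg (abs_nonneg _) _)
            apply mul_nonpos_of_nonneg_of_nonpos (by split_ifs <;> norm_num)
            exact hc2term k (by have := (Finset.mem_Icc.mp hk).1; omega)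
          · apply Finset.sum_nonpos
            intro k _
            apply mul_nonpos_of_nonpos_of_nonneg _ (Real.rpow_nonneg (abs_nonneg _) _)
            apply mul_nonpos_of_nonneg_of_nonpos (by split_ifs <;> norm_num)
            linarith [hmax k]
      have := hsub j₀ t₀ hj₀1 ht₀i
      linarith
    · -- boundary maximum
      have hmem : U j₀ t₀ ∈ S' := ⟨j₀, t₀, ht₀, hcase, rfl⟩
      have h2 : U j₀ t₀ ≤ sSup S' := le_csSup hS'bdd hmem
      apply csSup_le hSne
      rintro y ⟨j, t, ht, rfl⟩
      have h1 := hdom j t ht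
      simp only [hWdef] at h1
      nlinarith [ht.1, ht.2, ht₀.1]
  have hle : sSup S ≤ sSup S' := by
    apply le_of_forall_pos_le_add
    intro δ hδ
    have := main (δ / T) (div_pos hδ hT)
    calc sSup S ≤ sSup S' + δ / T * T := this
      _ = sSup S' + δ := by rw [div_mul_cancel₀ _ (ne_of_gt hT)]
  exact le_antisymm hle (csSup_le_csSup hSbdd hS'ne hS'sub)

/-- maximum principle for the semi-discrete asymmetric scheme with
absorbing condition: for the semi-discrete operator `R̃ = A + B` (central differencing
for diffusion, upwind for drift, trapezoidal quadrature with zeta correction for the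
singular integral), under `N̂(x_j) ≤ 0`, `C_{2,β}(x_j) ≥ 0`, `C_h(x_j) ≥ 0` on
`I_h = {j : |jh| < 1}` and the absorbing condition `U_j ≡ 0` for `|j| ≥ J`:
(i) a discrete subsolution attains its maximum over `ℤ × [0,T]` on the parabolic
boundary `∂I_{h,T} = (ℤ × [0,T]) ∖ (I_h × (0,T])`, and (ii) a discrete supersolution
attains its minimum there. -/
theorem stmt_18 (α β : ℝ) (hα : α ∈ Set.Ioo (0:ℝ) 2) (hα1 : α ≠ 1)
    (hβ : β ∈ Set.Ioo (-1:ℝ) 1)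
    (f g σ : ℝ → ℝ) (hf : ContDiff ℝ 1 f) (hg : ContDiff ℝ 2 g)
    (hσC : ContDiff ℝ 1 σ) (hσ0 : ∀ x, σ x ≠ 0)
    (hσα : ContDiff ℝ 2 fun x => |σ x| ^ α)
    (J : ℤ) (hJ : 2 ≤ J) (h : ℝ) (hh : h = 1 / (J : ℝ)) (T : ℝ) (hT : 0 < T)
    -- the coefficient functions of the scheme
    (MM NN C1b C2b Mhat Nhat Ch : ℝ → ℝ)
    (hMM : ∀ x, MM x = |σ x| ^ α * deriv (fun y => g y ^ 2 / |σ y| ^ α) x - f x)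
    (hNN : ∀ x, NN x = (1/2) * |σ x| ^ α * deriv (deriv (fun y => g y ^ 2 / |σ y| ^ α)) x
      - |σ x| ^ α * deriv (fun y => f y / |σ y| ^ α) x)
    (hC1b : ∀ x, C1b x = if 0 < σ x then Cp α β else Cn α β)
    (hC2b : ∀ x, C2b x = if 0 < σ x then -(β * Calpha α) else β * Calpha α)
    (hMhat : ∀ x, Mhat x =
      if 1 - x < |σ x| then
        MM x - |σ x| ^ α * (C2b x / (1 - α)) * (|σ x| ^ (1 - α) - (1 - x) ^ (1 - α))
      else MM x)
    (hNhat : ∀ x, Nhat x = NN x + β * Calpha α * deriv σ x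
      - |σ x| ^ α * ((if 0 < σ x then Cp α (-β) else Cn α (-β)) / α) * (1 - x) ^ (-α)
      - |σ x| ^ α * (C1b x / α) * (1 + x) ^ (-α))
    (hCh : ∀ x, Ch x = g x ^ 2 / 2
      - (Calpha α * |σ x| ^ α / 2) * zetaR (α - 1) * h ^ ((2 : ℝ) - α))
    -- the semi-discrete solution and its time derivative
    (U U' : ℤ → ℝ → ℝ)
    (hUcont : ∀ j : ℤ, ContinuousOn (U j) (Set.Icc 0 T))
    (hUderiv : ∀ j : ℤ, ∀ t ∈ Set.Ioc (0:ℝ) T, HasDerivAt (U j) (U' j t) t)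
    (hUzero : ∀ j : ℤ, ∀ t : ℝ, J ≤ |j| → U j t = 0)
    -- the discrete spatial operators A and B
    (AU BU : ℤ → ℝ → ℝ)
    (hAU : ∀ j : ℤ, |(j : ℝ) * h| < 1 → ∀ t : ℝ, AU j t =
      Ch ((j : ℝ) * h) * (U (j + 1) t - 2 * U j t + U (j - 1) t) / h ^ 2
        + Mhat ((j : ℝ) * h) *
            (if Mhat ((j : ℝ) * h) < 0 then (U j t - U (j - 1) t) / h
             else (U (j + 1) t - U j t) / h)
        + Nhat ((j : ℝ) * h) * U j t)
    (hBU : ∀ j : ℤ, |(j : ℝ) * h| < 1 → ∀ t : ℝ, BU j t =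
      if 1 < |σ ((j : ℝ) * h)| + (j : ℝ) * h then
        |σ ((j : ℝ) * h)| ^ α * C1b ((j : ℝ) * h) * h *
          ∑ k ∈ (Finset.Icc (1 - J) (J - 1)).erase j,
            (if k = 1 - J ∨ k = J - 1 then (1/2 : ℝ) else 1) *
              (U k t - U j t) * |(k : ℝ) * h - (j : ℝ) * h| ^ (-(1 + α))
        + |σ ((j : ℝ) * h)| ^ α * C2b ((j : ℝ) * h) * h *
          ∑ k ∈ Finset.Icc (j + 1) J,
            (if k = J then (1/2 : ℝ) else 1) *
              (U k t - U j t - ((k : ℝ) * h - (j : ℝ) * h) * (U j t - U (j - 1) t) / h) *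
                |(k : ℝ) * h - (j : ℝ) * h| ^ (-(1 + α))
      else
        |σ ((j : ℝ) * h)| ^ α * C1b ((j : ℝ) * h) * h *
          ∑ k ∈ (Finset.Icc (1 - J) (J - 1)).erase j,
            (if k = 1 - J ∨ k = J - 1 then (1/2 : ℝ) else 1) *
              (U k t - U j t) * |(k : ℝ) * h - (j : ℝ) * h| ^ (-(1 + α))
        + |σ ((j : ℝ) * h)| ^ α * C2b ((j : ℝ) * h) * h *
          ((∑ k ∈ Finset.Icc (j + 1) (j + ⌊|σ ((j : ℝ) * h)| / h⌋),
              (if k = j + ⌊|σ ((j : ℝ) * h)| / h⌋ then (1/2 : ℝ) else 1) *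
                (U k t - U j t - ((k : ℝ) * h - (j : ℝ) * h) * (U j t - U (j - 1) t) / h) *
                  |(k : ℝ) * h - (j : ℝ) * h| ^ (-(1 + α)))
            + ∑ k ∈ Finset.Icc (j + ⌊|σ ((j : ℝ) * h)| / h⌋) J,
                (if k = j + ⌊|σ ((j : ℝ) * h)| / h⌋ ∨ k = J then (1/2 : ℝ) else 1) *
                  (U k t - U j t) * |(k : ℝ) * h - (j : ℝ) * h| ^ (-(1 + α))))
    -- sign assumptions on the coefficients
    (hNneg : ∀ j : ℤ, |(j : ℝ) * h| < 1 → Nhat ((j : ℝ) * h) ≤ 0)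
    (hC2pos : ∀ j : ℤ, |(j : ℝ) * h| < 1 → 0 ≤ C2b ((j : ℝ) * h))
    (hChpos : ∀ j : ℤ, |(j : ℝ) * h| < 1 → 0 ≤ Ch ((j : ℝ) * h)) :
    -- (i) maximum principle for subsolutions
    ((∀ j : ℤ, ∀ t : ℝ, |(j : ℝ) * h| < 1 → t ∈ Set.Ioc (0:ℝ) T →
        U' j t - (AU j t + BU j t) ≤ 0) →
      sSup {y : ℝ | ∃ j : ℤ, ∃ t ∈ Set.Icc (0:ℝ) T, y = U j t}
        = sSup {y : ℝ | ∃ j : ℤ, ∃ t ∈ Set.Icc (0:ℝ) T,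
            ¬(|(j : ℝ) * h| < 1 ∧ t ∈ Set.Ioc (0:ℝ) T) ∧ y = U j t}) ∧
    -- (ii) minimum principle for supersolutions
    ((∀ j : ℤ, ∀ t : ℝ, |(j : ℝ) * h| < 1 → t ∈ Set.Ioc (0:ℝ) T →
        0 ≤ U' j t - (AU j t + BU j t)) →
      sInf {y : ℝ | ∃ j : ℤ, ∃ t ∈ Set.Icc (0:ℝ) T, y = U j t}
        = sInf {y : ℝ | ∃ j : ℤ, ∃ t ∈ Set.Icc (0:ℝ) T,
            ¬(|(j : ℝ) * h| < 1 ∧ t ∈ Set.Ioc (0:ℝ) T) ∧ y = U j t}) := by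
  constructor
  · -- (i) maximum principle
    intro hsub
    have hC1nn : ∀ x : ℝ, 0 ≤ C1b x := by
      intro x
      have hca := Calpha_pos hα hα1
      rw [hC1b x]
      obtain ⟨hb1, hb2⟩ := hβ
      split_ifs
      · rw [Cp]; nlinarith
      · rw [Cn]; nlinarith
    exact key J hJ h hh T hT α σ Mhat Nhat C1b C2b Ch hC1nn U U' AU BU
      hUcont hUderiv hUzero hAU hBU hNneg hC2pos hChpos hsub
  · -- (ii) minimum principle
    intro hsup
    have hC1nn : ∀ x : ℝ, 0 ≤ C1b x := by
      intro x
      have hca := Calpha_pos hα hα1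
      rw [hC1b x]
      obtain ⟨hb1, hb2⟩ := hβ
      split_ifs
      · rw [Cp]; nlinarith
      · rw [Cn]; nlinarith
    have key1 : ∀ w x y r : ℝ, w * (-x - -y) * r = -(w * (x - y) * r) := by
      intro w x y r; ring
    have key2 : ∀ w a b c d e r : ℝ,
        w * (-a - -b - e * (-b - -c) / d) * r = -(w * (a - b - e * (b - c) / d) * r) := by
      intro w a b c d e r; ring
    have hkey := key J hJ h hh T hT α σ Mhat Nhat C1b C2b Ch hC1nn
      (fun j t => -U j t) (fun j t => -U' j t) (fun j t => -AU j t) (fun j t => -BU j t)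
      (fun j => (hUcont j).neg)
      (fun j t ht => (hUderiv j t ht).neg)
      (fun j t hj => by simp [hUzero j t hj])
      (fun j hj t => by
        rw [hAU j hj t]
        split_ifs <;> ring)
      (fun j hj t => by
        rw [hBU j hj t]
        split_ifs with hc <;>
          simp only [key1, key2, Finset.sum_neg_distrib] <;> ring)
      hNneg hC2pos hChpos
      (fun j t hj ht => by
        have := hsup j t hj ht
        linarith)
    have eS : {y : ℝ | ∃ j : ℤ, ∃ t ∈ Set.Icc (0:ℝ) T, y = -U j t}
        = -{y : ℝ | ∃ j : ℤ, ∃ t ∈ Set.Icc (0:ℝ) T, y = U j t} := by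
      ext y
      simp only [Set.mem_neg, Set.mem_setOf_eq]
      constructor
      · rintro ⟨j, t, ht, rfl⟩; exact ⟨j, t, ht, (neg_neg _)⟩
      · rintro ⟨j, t, ht, hy⟩; exact ⟨j, t, ht, by linarith⟩
    have eS' : {y : ℝ | ∃ j : ℤ, ∃ t ∈ Set.Icc (0:ℝ) T,
          ¬(|(j : ℝ) * h| < 1 ∧ t ∈ Set.Ioc (0:ℝ) T) ∧ y = -U j t}
        = -{y : ℝ | ∃ j : ℤ, ∃ t ∈ Set.Icc (0:ℝ) T,
          ¬(|(j : ℝ) * h| < 1 ∧ t ∈ Set.Ioc (0:ℝ) T) ∧ y = U j t} := by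
      ext y
      simp only [Set.mem_neg, Set.mem_setOf_eq]
      constructor
      · rintro ⟨j, t, ht, hb, rfl⟩; exact ⟨j, t, ht, hb, (neg_neg _)⟩
      · rintro ⟨j, t, ht, hb, hy⟩; exact ⟨j, t, ht, hb, by linarith⟩
    rw [Real.sInf_def, Real.sInf_def, ← eS, ← eS']
    exact congrArg Neg.neg hkey
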